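/- Let n ≥ 1 and ε ≥ 0. For s ∈ {0,1}ⁿ define v_i(s) = Π_{j≠i} s_j + ε·s_i. Let x : {0,1}ⁿ → (Fin n → ℝ) satisfy x_i(s) ≥ 0 for all i, s; Σ_i x_i(s) ≤ 1 for all s; and x_i monotone in s_i, i.e. x_i(s with i-th coordinate 0) ≤ x_i(s with i-th coordinate 1) for all s. Then there exists an agent i such that, at the profile sⁱ (equal to 1 at every coordinate except 0 at coordinate i), Σ_j x_j(sⁱ)·v_j(sⁱ) ≤ 1/n + (n−1)·ε, while v_i(sⁱ) = 1. Consequently no ex-post IC feasible (possibly randomized) single-item mechanism achieves better than an n-approximation to the optimal welfare on this instance. -/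
import Mathlib


open Finset

/-- The lower bound of Example 1.4 (Eden et al. 2018): with `n` agents, binary
signals, and valuations `v_i(s) = Π_{j≠i} s_j + ε·s_i`, every feasible
allocation rule `x` that is monotone in each agent's own signal has an agent
`i` whose "all-ones-except-`i`" profile `sⁱ` witnesses expected welfare at
most `1/n + (n−1)·ε`, while `v_i(sⁱ) = 1`.  Hence no ex-post IC feasible
(possibly randomized) single-item mechanism beats an `n`-approximation. -/
theorem n_lower_bound_randomized (n : ℕ) (hn : 1 ≤ n) (ε : ℝ) (hε : 0 ≤ ε)
    (v : Fin n → (Fin n → Bool) → ℝ)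
    (hv : ∀ i s, v i s =
      (∏ j ∈ Finset.univ.erase i, (if s j then (1 : ℝ) else 0))
        + ε * (if s i then 1 else 0))
    (x : (Fin n → Bool) → Fin n → ℝ)
    (hnn : ∀ s i, 0 ≤ x s i)
    (hfeas : ∀ s, ∑ i, x s i ≤ 1)
    (hmono : ∀ s i, x (Function.update s i false) i ≤ x (Function.update s i true) i) :
    ∃ i : Fin n,
      (∑ j, x (fun l => if l = i then false else true) j
          * v j (fun l => if l = i then false else true)
        ≤ 1 / (n : ℝ) + ((n : ℝ) - 1) * ε)
      ∧ v i (fun l => if l = i then false else true) = 1 := by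
  have hnpos : (0 : ℝ) < n := by exact_mod_cast hn
  set o : Fin n → Bool := fun _ => true with ho
  have hne : (Finset.univ : Finset (Fin n)).Nonempty := ⟨⟨0, hn⟩, mem_univ _⟩
  have hsum : ∑ j, x o j ≤ ∑ _j : Fin n, (1 / (n : ℝ)) := by
    have h1 : ∑ _j : Fin n, (1 / (n : ℝ)) = 1 := by
      simp [Finset.sum_const, card_univ]
      field_simp
    rw [h1]; exact hfeas o
  obtain ⟨i, _, hi⟩ := Finset.exists_le_of_sum_le hne hsum
  set s' : Fin n → Bool := fun l => if l = i then false else true with hs'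
  -- monotonicity step
  have hso : s' = Function.update o i false := by
    funext l; simp [hs', Function.update_apply, ho]
  have hoo : Function.update o i true = o := by
    funext l; simp [Function.update_apply, ho]
  have hxi : x s' i ≤ 1 / (n : ℝ) := by
    have := hmono o i
    rw [hoo, ← hso] at this
    exact this.trans hi
  -- valuations at s'
  have hvi : v i s' = 1 := by
    rw [hv]
    have : (∏ j ∈ Finset.univ.erase i, (if s' j then (1 : ℝ) else 0)) = 1 := by
      apply Finset.prod_eq_one
      intro j hj
      have : j ≠ i := (Finset.mem_erase.1 hj).1
      simp [hs', this]
    rw [this]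
    simp [hs']
  have hvj : ∀ j, j ≠ i → v j s' = ε := by
    intro j hj
    rw [hv]
    have : (∏ k ∈ Finset.univ.erase j, (if s' k then (1 : ℝ) else 0)) = 0 := by
      apply Finset.prod_eq_zero (Finset.mem_erase.2 ⟨Ne.symm hj, mem_univ i⟩)
      simp [hs']
    rw [this]
    simp [hs', hj]
  have hx1 : ∀ j, x s' j ≤ 1 := by
    intro j
    have := Finset.single_le_sum (fun k _ => hnn s' k) (mem_univ j)
    exact this.trans (hfeas s')
  refine ⟨i, ?_, hvi⟩
  have hsplit : ∑ j, x s' j * v j s'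
      = x s' i * v i s' + ∑ j ∈ Finset.univ.erase i, x s' j * v j s' :=
    (Finset.add_sum_erase _ _ (mem_univ i)).symm
  rw [hsplit, hvi, mul_one]
  have h2 : ∑ j ∈ Finset.univ.erase i, x s' j * v j s' ≤ ((n : ℝ) - 1) * ε := by
    have hb : ∀ j ∈ Finset.univ.erase i, x s' j * v j s' ≤ ε := by
      intro j hj
      rw [hvj j (Finset.mem_erase.1 hj).1]
      calc x s' j * ε ≤ 1 * ε := mul_le_mul_of_nonneg_right (hx1 j) hε
        _ = ε := one_mul ε
    calc ∑ j ∈ Finset.univ.erase i, x s' j * v j s'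
        ≤ ∑ _j ∈ Finset.univ.erase i, ε := Finset.sum_le_sum hb
      _ = ((Finset.univ.erase i).card : ℝ) * ε := by rw [Finset.sum_const, nsmul_eq_mul]
      _ = ((n : ℝ) - 1) * ε := by
          rw [Finset.card_erase_of_mem (mem_univ i), card_univ, Fintype.card_fin]
          have : ((n - 1 : ℕ) : ℝ) = (n : ℝ) - 1 := by
            have := Nat.cast_sub hn (R := ℝ); simpa using this
          rw [this]
  linarith
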